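/- For p ∈ (1, ∞) and q ∈ (0, 1), the derivative of K_{1,p} satisfies (d/dq) K_{1,p}(q) = [(2 - 2/p)E_{1,p}(q) - (2 - 2/p - q²)K_{1,p}(q)] / (q(1 - q²)). -/

import Mathlib

open Real MeasureTheory Set intervalIntegral Metric
open scoped Interval

lemma aux_int_mul_w {p : ℝ} (hp : 1 < p) {g : ℝ → ℝ} (hg : ContinuousOn g (Icc 0 1)) :
    IntervalIntegrable (fun z => g z * (1 - z ^ 2) ^ (-(1 / p))) volume 0 1 := by
  have hp0 : (0:ℝ) < p := lt_trans one_pos hp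
  have hα : -1 < -(1/p) := by
    have : 1/p < 1 := by rw [div_lt_one hp0]; exact hp
    linarith
  have base : IntervalIntegrable (fun z : ℝ => (1 - z) ^ (-(1 / p))) volume 0 1 := by
    have h1 : IntervalIntegrable (fun x : ℝ => x ^ (-(1 / p))) volume 0 1 :=
      intervalIntegrable_rpow' hα
    have := (h1.comp_sub_left 1).symm
    simpa using this
  have hcont : ContinuousOn (fun z : ℝ => g z * (1 + z) ^ (-(1 / p))) (uIcc 0 1) := by
    rw [uIcc_of_le (by norm_num : (0:ℝ) ≤ 1)]
    apply hg.mul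
    apply ContinuousOn.rpow_const (by fun_prop)
    intro z hz
    left
    simp only [mem_Icc] at hz
    nlinarith [hz.1]
  have := base.continuousOn_mul hcont
  rw [intervalIntegrable_iff_integrableOn_Ioc_of_le (by norm_num : (0:ℝ) ≤ 1)] at this ⊢
  apply this.congr_fun ?_ measurableSet_Ioc
  intro z hz
  simp only [mem_Ioc] at hz
  have h1 : (0:ℝ) ≤ 1 - z := by linarith
  have h2 : (0:ℝ) ≤ 1 + z := by linarith
  have : (1 - z^2 : ℝ) = (1 - z) * (1 + z) := by ring
  simp only []
  rw [this, Real.mul_rpow h1 h2]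
  ring

lemma aux_ibp (p q : ℝ) (hp : 1 < p) (hq : q ∈ Set.Ioo (0:ℝ) 1) :
    (1 - q^2) * (∫ z in (0:ℝ)..1, (z^2 * (1 - q^2*z^2)^(-(3/2):ℝ)) * (1 - z^2)^(-(1/p)))
      = (∫ z in (0:ℝ)..1, ((1 - q^2*z^2)^(-(1/2):ℝ)) * (1 - z^2)^(-(1/p)))
        - (2 - 2/p) * (∫ z in (0:ℝ)..1, (z^2 * (1 - q^2*z^2)^(-(1/2):ℝ)) * (1 - z^2)^(-(1/p))) := by
  obtain ⟨hq0, hq1⟩ := hq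
  have hp0 : (0:ℝ) < p := lt_trans one_pos hp
  have hα1 : 1/p < 1 := by rw [div_lt_one hp0]; exact hp
  have hα0 : 0 < 1/p := by positivity
  set c : ℝ := 1 - 1/p with hc
  have hc0 : 0 < c := by rw [hc]; linarith
  -- positivity of 1 - q^2 z^2 on [0,1]
  have hbase : ∀ z ∈ Icc (0:ℝ) 1, (0:ℝ) < 1 - q^2*z^2 := by
    intro z hz
    rw [mem_Icc] at hz
    have hz2 : z^2 ≤ 1 := by nlinarith [hz.1, hz.2]
    have hq2 : q^2 < 1 := by nlinarith
    nlinarith [sq_nonneg q, sq_nonneg z]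
  set G : ℝ → ℝ := fun z => z * (1 - z^2)^c * (1 - q^2*z^2)^(-(1/2):ℝ) with hG
  set G' : ℝ → ℝ := fun z =>
      (((1 - z^2) - (2 - 2/p)*z^2) * (1 - q^2*z^2)^(-(1/2):ℝ)) * (1 - z^2)^(-(1/p))
        + ((q^2*z^2*(1 - z^2)) * (1 - q^2*z^2)^(-(3/2):ℝ)) * (1 - z^2)^(-(1/p)) with hG'
  have hderiv : ∀ z ∈ Ioo (0:ℝ) 1, HasDerivAt G (G' z) z := by
    intro z hz
    rw [mem_Ioo] at hz
    have hbz : (0:ℝ) < 1 - z^2 := by nlinarith [hz.1, hz.2]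
    have hbq : (0:ℝ) < 1 - q^2*z^2 := hbase z ⟨hz.1.le, hz.2.le⟩
    have hu : HasDerivAt (fun z : ℝ => 1 - z^2) (-(2*z)) z := by
      simpa using ((hasDerivAt_pow 2 z).const_sub 1)
    have hA : HasDerivAt (fun z : ℝ => (1 - z^2)^c) (c * (1 - z^2)^(c-1) * (-(2*z))) z :=
      by have := (Real.hasDerivAt_rpow_const (p := c) (Or.inl hbz.ne')).comp z hu; exact this
    have hB : HasDerivAt (fun z : ℝ => 1 - q^2*z^2) (-(q^2*(2*z))) z := by
      have : HasDerivAt (fun z : ℝ => q^2*z^2) (q^2*(2*z)) z := by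
        simpa using ((hasDerivAt_pow 2 z).const_mul (q^2))
      simpa using (this.const_sub 1)
    have hC : HasDerivAt (fun z : ℝ => (1 - q^2*z^2)^(-(1/2):ℝ))
        ((-(1/2)) * (1 - q^2*z^2)^((-(1/2):ℝ)-1) * (-(q^2*(2*z)))) z :=
      by have := (Real.hasDerivAt_rpow_const (p := (-(1/2):ℝ)) (Or.inl hbq.ne')).comp z hB; exact this
    have hmain := ((hasDerivAt_id z).mul hA).mul hC
    refine hmain.congr_deriv ?_
    rw [hG']
    have e1 : (1 - z^2)^c = (1 - z^2) * (1 - z^2)^(-(1/p)) := by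
      rw [show c = 1 + (-(1/p)) by rw [hc]; ring, Real.rpow_add hbz, Real.rpow_one]
    have e2 : (1 - z^2)^(c-1) = (1 - z^2)^(-(1/p)) := by
      rw [show c - 1 = -(1/p) by rw [hc]; ring]
    have e3 : (1 - q^2*z^2)^((-(1/2):ℝ)-1) = (1 - q^2*z^2)^(-(3/2):ℝ) := by norm_num
    rw [Pi.mul_apply, e1, e2, e3, hc]
    simp only [id_eq, Pi.mul_apply]
    ring
  have hcontq : ContinuousOn (fun z : ℝ => (1 - q^2*z^2)^(-(1/2):ℝ)) (Icc 0 1) := by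
    apply ContinuousOn.rpow_const (by fun_prop)
    intro z hz; left; exact (hbase z hz).ne'
  have hcontq3 : ContinuousOn (fun z : ℝ => (1 - q^2*z^2)^(-(3/2):ℝ)) (Icc 0 1) := by
    apply ContinuousOn.rpow_const (by fun_prop)
    intro z hz; left; exact (hbase z hz).ne'
  have hcont : ContinuousOn G (Icc 0 1) := by
    rw [hG]
    apply ContinuousOn.mul _ hcontq
    apply ContinuousOn.mul continuousOn_id
    apply ContinuousOn.rpow_const (by fun_prop)
    intro z hz; right; exact hc0.le
  have hint : IntervalIntegrable G' volume 0 1 := by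
    rw [hG']
    apply IntervalIntegrable.add
    · exact aux_int_mul_w hp ((by fun_prop : ContinuousOn (fun z : ℝ => 1 - z^2 - (2-2/p)*z^2) (Icc 0 1)).mul hcontq)
    · exact aux_int_mul_w hp ((by fun_prop : ContinuousOn (fun z : ℝ => q^2*z^2*(1-z^2)) (Icc 0 1)).mul hcontq3)
  have hftc : ∫ z in (0:ℝ)..1, G' z = G 1 - G 0 :=
    intervalIntegral.integral_eq_sub_of_hasDeriv_right_of_le (by norm_num) hcont
      (fun x hx => (hderiv x hx).hasDerivWithinAt) hint
  have hG1 : G 1 = 0 := by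
    rw [hG]
    norm_num
    left
    exact Real.zero_rpow hc0.ne'
  have hG0 : G 0 = 0 := by rw [hG]; norm_num
  have hpt : EqOn G' (fun z =>
      ((1 - q^2*z^2)^(-(1/2):ℝ)) * (1 - z^2)^(-(1/p))
      - (2 - 2/p) * ((z^2 * (1 - q^2*z^2)^(-(1/2):ℝ)) * (1 - z^2)^(-(1/p)))
      - (1 - q^2) * ((z^2 * (1 - q^2*z^2)^(-(3/2):ℝ)) * (1 - z^2)^(-(1/p)))) (uIcc 0 1) := by
    intro z hz
    rw [uIcc_of_le (by norm_num : (0:ℝ) ≤ 1)] at hz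
    have hb := hbase z hz
    have key : (1 - q^2*z^2) * (1 - q^2*z^2)^(-(3/2):ℝ) = (1 - q^2*z^2)^(-(1/2):ℝ) := by
      have h2 := Real.rpow_add hb 1 (-(3/2))
      rw [Real.rpow_one] at h2
      rw [← h2]
      norm_num
    simp only [hG']
    rw [← key]
    ring
  have hKint := aux_int_mul_w hp hcontq
  have hJint := aux_int_mul_w hp (((by fun_prop : ContinuousOn (fun z : ℝ => z^2) (Icc 0 1))).mul hcontq)
  have hIint := aux_int_mul_w hp (((by fun_prop : ContinuousOn (fun z : ℝ => z^2) (Icc 0 1))).mul hcontq3)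
  have hsplit : ∫ z in (0:ℝ)..1, G' z
      = (∫ z in (0:ℝ)..1, ((1 - q^2*z^2)^(-(1/2):ℝ)) * (1 - z^2)^(-(1/p)))
        - (2 - 2/p) * (∫ z in (0:ℝ)..1, (z^2 * (1 - q^2*z^2)^(-(1/2):ℝ)) * (1 - z^2)^(-(1/p)))
        - (1 - q^2) * (∫ z in (0:ℝ)..1, (z^2 * (1 - q^2*z^2)^(-(3/2):ℝ)) * (1 - z^2)^(-(1/p))) := by
    rw [intervalIntegral.integral_congr hpt]
    simp only [Pi.mul_apply] at hJint hIint
    rw [intervalIntegral.integral_sub (hKint.sub (hJint.const_mul _)) (hIint.const_mul _),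
        intervalIntegral.integral_sub hKint (hJint.const_mul _),
        intervalIntegral.integral_const_mul, intervalIntegral.integral_const_mul]
  rw [hftc, hG1, hG0] at hsplit
  linarith

/-- The complete `p`-elliptic integral of the first kind. -/
noncomputable def K1 (p q : ℝ) : ℝ :=
  ∫ z in (0:ℝ)..1, (1 - q ^ 2 * z ^ 2) ^ (-(1/2) : ℝ) * (1 - z ^ 2) ^ (-(1 / p))

/-- The complete `p`-elliptic integral of the second kind. -/
noncomputable def E1 (p q : ℝ) : ℝ :=
  ∫ z in (0:ℝ)..1, (1 - q ^ 2 * z ^ 2) ^ ((1/2) : ℝ) * (1 - z ^ 2) ^ (-(1 / p))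

lemma aux_deriv (p q : ℝ) (hp : 1 < p) (hq : q ∈ Set.Ioo (0:ℝ) 1) :
    HasDerivAt (K1 p)
      (∫ z in (0:ℝ)..1, (q * z^2 * (1 - q^2*z^2)^(-(3/2):ℝ)) * (1 - z^2)^(-(1/p))) q := by
  obtain ⟨hq0, hq1⟩ := hq
  set r : ℝ := (1 + q)/2 with hr
  have hr1 : r < 1 := by rw [hr]; linarith
  have hrq : q < r := by rw [hr]; linarith
  have hr0 : 0 < r := by rw [hr]; linarith
  set ε : ℝ := (1 - q)/2 with hε
  have hε0 : 0 < ε := by rw [hε]; linarith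
  have hball : ∀ x ∈ ball q ε, |x| < r := by
    intro x hx
    rw [mem_ball, Real.dist_eq, abs_lt] at hx
    rw [abs_lt]; constructor <;> [skip; skip] <;> rw [hr] at * <;> rw [hε] at hx <;>
      [linarith [hx.1]; linarith [hx.2] ]
  have hpos : ∀ x : ℝ, |x| < r → ∀ z ∈ Ι (0:ℝ) 1, 0 < 1 - r^2 ∧ 1 - r^2 ≤ 1 - x^2*z^2 := by
    intro x hx z hz
    rw [uIoc_of_le (by norm_num : (0:ℝ) ≤ 1), mem_Ioc] at hz
    constructor
    · nlinarith
    · have h1 : x^2 ≤ r^2 := by nlinarith [sq_abs x, abs_nonneg x]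
      have h2 : z^2 ≤ 1 := by nlinarith [hz.1, hz.2]
      nlinarith [sq_nonneg x, sq_nonneg z, hz.1]
  have hwnn : ∀ z ∈ Ι (0:ℝ) 1, (0:ℝ) ≤ (1 - z^2) ^ (-(1/p)) := by
    intro z hz
    exact Real.rpow_nonneg (by rw [uIoc_of_le (by norm_num : (0:ℝ) ≤ 1), mem_Ioc] at hz; nlinarith [hz.1, hz.2]) _
  have main := intervalIntegral.hasDerivAt_integral_of_dominated_loc_of_deriv_le
      (μ := volume) (a := (0:ℝ)) (b := 1)
      (F := fun x z => (1 - x^2*z^2)^(-(1/2):ℝ) * (1 - z^2)^(-(1/p)))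
      (F' := fun x z => (x * z^2 * (1 - x^2*z^2)^(-(3/2):ℝ)) * (1 - z^2)^(-(1/p)))
      (x₀ := q) (bound := fun z => (1 - r^2)^(-(3/2):ℝ) * (1 - z^2)^(-(1/p))) (ball_mem_nhds q hε0)
      (Filter.Eventually.of_forall fun x => (Measurable.aestronglyMeasurable (by fun_prop)))
      ?_ (Measurable.aestronglyMeasurable (by fun_prop)) ?_ ?_ ?_
  · exact main.2
  · -- integrability of F q
    apply aux_int_mul_w hp
    apply ContinuousOn.rpow_const (by fun_prop)
    intro z hz
    left
    rw [mem_Icc] at hz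
    have hz2 : z^2 ≤ 1 := by nlinarith [hz.1, hz.2]
    have hq2 : q^2 < 1 := by nlinarith
    have : q^2*z^2 < 1 := by nlinarith [sq_nonneg q, sq_nonneg z]
    intro h0
    linarith
  · -- bound
    apply Filter.Eventually.of_forall
    intro z hz x hx
    have h1 := hpos x (hball x hx) z hz
    have hw := hwnn z hz
    rw [uIoc_of_le (by norm_num : (0:ℝ) ≤ 1), mem_Ioc] at hz
    rw [Real.norm_eq_abs, abs_mul, abs_of_nonneg hw, abs_mul, abs_mul]
    have hxz : |x| * |z^2| ≤ 1 := by
      have := hball x hx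
      rw [abs_of_nonneg (sq_nonneg z)]
      nlinarith [abs_nonneg x, hz.1, hz.2, sq_nonneg z]
    have hx3 : |(1 - x^2*z^2)^(-(3/2):ℝ)| = (1 - x^2*z^2)^(-(3/2):ℝ) :=
      abs_of_nonneg (Real.rpow_nonneg (by linarith [h1.1, h1.2]) _)
    have hmono : (1 - x^2*z^2)^(-(3/2):ℝ) ≤ (1 - r^2)^(-(3/2):ℝ) :=
      Real.rpow_le_rpow_of_nonpos h1.1 h1.2 (by norm_num)
    have hnn : (0:ℝ) ≤ (1 - r^2)^(-(3/2):ℝ) := Real.rpow_nonneg (by nlinarith [h1.1]) _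
    calc |x| * |z^2| * |(1 - x^2*z^2)^(-(3/2):ℝ)| * (1 - z^2)^(-(1/p))
        ≤ 1 * ((1 - r^2)^(-(3/2):ℝ)) * (1 - z^2)^(-(1/p)) := by
          apply mul_le_mul_of_nonneg_right _ hw
          rw [hx3]
          calc |x| * |z^2| * (1 - x^2*z^2)^(-(3/2):ℝ) ≤ 1 * (1 - r^2)^(-(3/2):ℝ) := by
                apply mul_le_mul hxz hmono (Real.rpow_nonneg (by linarith [h1.1, h1.2]) _) one_pos.le
            _ = 1 * (1 - r^2)^(-(3/2):ℝ) := rfl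
      _ = (1 - r^2)^(-(3/2):ℝ) * (1 - z^2)^(-(1/p)) := by ring
  · -- bound integrable
    exact aux_int_mul_w hp (continuousOn_const)
  · -- differentiability
    apply Filter.Eventually.of_forall
    intro z hz x hx
    have h1 := hpos x (hball x hx) z hz
    have hb : (0:ℝ) < 1 - x^2*z^2 := lt_of_lt_of_le h1.1 h1.2
    have inner : HasDerivAt (fun y : ℝ => 1 - y^2*z^2) (-(2*x*z^2)) x := by
      have : HasDerivAt (fun y : ℝ => y^2*z^2) (2*x*z^2) x := by
        simpa using ((hasDerivAt_pow 2 x).mul_const (z^2))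
      simpa using this.const_sub 1
    have outer := (Real.hasDerivAt_rpow_const (p := (-(1/2):ℝ)) (Or.inl hb.ne')).comp x inner
    have := outer.mul_const ((1 - z^2)^(-(1/p)))
    refine this.congr_deriv ?_
    have hexp : ((-(1/2):ℝ) - 1) = (-(3/2):ℝ) := by norm_num
    rw [hexp]
    ring

theorem K1_hasDerivAt (p q : ℝ) (hp : 1 < p) (hq : q ∈ Set.Ioo (0:ℝ) 1) :
    HasDerivAt (K1 p)
      (((2 - 2 / p) * E1 p q - (2 - 2 / p - q ^ 2) * K1 p q) / (q * (1 - q ^ 2))) q := by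
  obtain ⟨hq0, hq1⟩ := hq
  have hbase : ∀ z ∈ Icc (0:ℝ) 1, (0:ℝ) < 1 - q^2*z^2 := by
    intro z hz
    rw [mem_Icc] at hz
    have hz2 : z^2 ≤ 1 := by nlinarith [hz.1, hz.2]
    have hq2 : q^2 < 1 := by nlinarith
    nlinarith [sq_nonneg q, sq_nonneg z]
  have hcontq : ContinuousOn (fun z : ℝ => (1 - q^2*z^2)^(-(1/2):ℝ)) (Icc 0 1) := by
    apply ContinuousOn.rpow_const (by fun_prop)
    intro z hz; left; exact (hbase z hz).ne'
  have hcontq3 : ContinuousOn (fun z : ℝ => (1 - q^2*z^2)^(-(3/2):ℝ)) (Icc 0 1) := by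
    apply ContinuousOn.rpow_const (by fun_prop)
    intro z hz; left; exact (hbase z hz).ne'
  have hKint := aux_int_mul_w hp hcontq
  have hJint := aux_int_mul_w hp (((by fun_prop : ContinuousOn (fun z : ℝ => z^2) (Icc 0 1))).mul hcontq)
  simp only [Pi.mul_apply] at hJint
  set J : ℝ := ∫ z in (0:ℝ)..1, (z^2 * (1 - q^2*z^2)^(-(1/2):ℝ)) * (1 - z^2)^(-(1/p)) with hJ
  set I : ℝ := ∫ z in (0:ℝ)..1, (z^2 * (1 - q^2*z^2)^(-(3/2):ℝ)) * (1 - z^2)^(-(1/p)) with hI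
  have hE : E1 p q = K1 p q - q^2 * J := by
    rw [hJ, E1, K1, ← intervalIntegral.integral_const_mul,
      ← intervalIntegral.integral_sub hKint (hJint.const_mul _)]
    apply intervalIntegral.integral_congr
    intro z hz
    rw [uIcc_of_le (by norm_num : (0:ℝ) ≤ 1)] at hz
    have hb := hbase z hz
    have key : (1 - q^2*z^2)^((1/2):ℝ) = (1 - q^2*z^2) * (1 - q^2*z^2)^(-(1/2):ℝ) := by
      have h2 := Real.rpow_add hb 1 (-(1/2))
      rw [Real.rpow_one] at h2
      rw [← h2]
      norm_num
    simp only []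
    rw [key]
    ring
  have hIBP := aux_ibp p q hp ⟨hq0, hq1⟩
  rw [← hJ, ← hI] at hIBP
  have hD := aux_deriv p q hp ⟨hq0, hq1⟩
  have hval : (∫ z in (0:ℝ)..1, (q * z^2 * (1 - q^2*z^2)^(-(3/2):ℝ)) * (1 - z^2)^(-(1/p))) = q * I := by
    rw [hI, ← intervalIntegral.integral_const_mul]
    apply intervalIntegral.integral_congr
    intro z hz
    simp only []
    ring
  rw [hval] at hD
  convert hD using 1
  have hKK : K1 p q = ∫ z in (0:ℝ)..1, ((1 - q^2*z^2)^(-(1/2):ℝ)) * (1 - z^2)^(-(1/p)) := rfl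
  rw [← hKK] at hIBP
  have hden : q * (1 - q^2) ≠ 0 := by
    have : (0:ℝ) < 1 - q^2 := by nlinarith
    positivity
  rw [div_eq_iff hden]
  linear_combination (2 - 2/p) * hE - q^2 * hIBP
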